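/- For each rooted transitive frame F and each n ≥ 1: F validates Wid_n^• iff every irreflexive antichain in F has at most n elements. -/

import Mathlib

/-- A Kripke frame: a set of worlds with a binary relation. -/
structure Frame where
  World : Type
  rel : World → World → Prop

/-- `f` is a reduction (surjective p-morphism) of `F` to `G`. -/
def Reduction (F G : Frame) (f : F.World → G.World) : Prop :=
  Function.Surjective f ∧
  (∀ w u, F.rel w u → G.rel (f w) (f u)) ∧
  (∀ w v, G.rel (f w) v → ∃ u, F.rel w u ∧ f u = v)

/-- `F` is reducible to `G`. -/
def Reducible (F G : Frame) : Prop := ∃ f, Reduction F G f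

/-- The subframe of `F` generated by the point `w`. -/
def Frame.genSub (F : Frame) (w : F.World) : Frame :=
  ⟨{v // Relation.ReflTransGen F.rel w v}, fun a b => F.rel a.1 b.1⟩

/-- Modal formulas over countably many propositional variables. -/
inductive Formula where
  | var : ℕ → Formula
  | bot : Formula
  | imp : Formula → Formula → Formula
  | box : Formula → Formula
deriving DecidableEq

namespace Formula

def neg (a : Formula) : Formula := .imp a .bot
def top : Formula := .imp .bot .bot
def and (a b : Formula) : Formula := neg (.imp a (neg b))
def or (a b : Formula) : Formula := .imp (neg a) b
def dia (a : Formula) : Formula := neg (.box (neg a))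

/-- Finite conjunction of a list of formulas. -/
def bigConj (l : List Formula) : Formula := l.foldr and top

/-- Finite disjunction of a list of formulas. -/
def bigDisj (l : List Formula) : Formula := l.foldr or .bot

end Formula

/-- Kripke satisfaction of a formula at a world of `F` under valuation `V`. -/
def Sat (F : Frame) (V : ℕ → F.World → Prop) : F.World → Formula → Prop
  | w, .var n => V n w
  | _, .bot => False
  | w, .imp a b => Sat F V w a → Sat F V w b
  | w, .box a => ∀ u, F.rel w u → Sat F V u a

/-- `φ` is valid at the point `w` of `F` (true under all valuations). -/
def SatAll (F : Frame) (w : F.World) (φ : Formula) : Prop := ∀ V, Sat F V w φ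

/-- `φ` is valid in the frame `F`. -/
def Valid (F : Frame) (φ : Formula) : Prop := ∀ V w, Sat F V w φ

/-- The formula `Wid_n^•`, with `p_i` encoded as variable `i`:
`⋀_{i≤n} ◇(p_i ∧ □¬p_i) → ⋁_{0 ≤ i ≠ j ≤ n} ◇(p_i ∧ (p_j ∨ ◇p_j))`. -/
def widBul (n : ℕ) : Formula :=
  .imp
    (Formula.bigConj ((List.finRange (n + 1)).map fun i =>
      Formula.dia (.and (.var i) (.box (Formula.neg (.var i))))))
    (Formula.bigDisj ((List.finRange (n + 1)).flatMap fun i =>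
      (List.finRange (n + 1)).flatMap fun j =>
        if i = j then []
        else [Formula.dia (.and (.var i) (.or (.var j) (Formula.dia (.var j))))]))

/-- `A` is an antichain w.r.t. `R`: distinct elements are `R`-incomparable. -/
def AntichainIn {W : Type*} (R : W → W → Prop) (A : Set W) : Prop :=
  ∀ u ∈ A, ∀ v ∈ A, u ≠ v → ¬ R u v ∧ ¬ R v u


section Helpers

variable {F : Frame} {V : ℕ → F.World → Prop} {w : F.World}

lemma sat_and {a b : Formula} :
    Sat F V w (.and a b) ↔ Sat F V w a ∧ Sat F V w b := by
  simp only [Formula.and, Formula.neg, Sat]; tauto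

lemma sat_or {a b : Formula} :
    Sat F V w (.or a b) ↔ Sat F V w a ∨ Sat F V w b := by
  simp only [Formula.or, Formula.neg, Sat]; tauto

lemma sat_dia {a : Formula} :
    Sat F V w (.dia a) ↔ ∃ u, F.rel w u ∧ Sat F V u a := by
  simp only [Formula.dia, Formula.neg, Sat]
  constructor
  · intro h
    by_contra h'
    push_neg at h'
    exact h fun u hu ha => h' u hu ha
  · rintro ⟨u, hu, ha⟩ h
    exact h u hu ha

lemma sat_bigConj {l : List Formula} :
    Sat F V w (Formula.bigConj l) ↔ ∀ φ ∈ l, Sat F V w φ := by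
  induction l with
  | nil => simp [Formula.bigConj, Formula.top, Sat]
  | cons a t ih =>
      simp only [Formula.bigConj, List.foldr_cons, List.mem_cons]
      rw [show (List.foldr Formula.and Formula.top t) = Formula.bigConj t from rfl] at *
      rw [sat_and, ih]
      constructor
      · rintro ⟨ha, ht⟩ φ (rfl | h); exact ha; exact ht φ h
      · intro h; exact ⟨h a (Or.inl rfl), fun φ hφ => h φ (Or.inr hφ)⟩

lemma sat_bigDisj {l : List Formula} :
    Sat F V w (Formula.bigDisj l) ↔ ∃ φ ∈ l, Sat F V w φ := by
  induction l with
  | nil => simp [Formula.bigDisj, Sat]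
  | cons a t ih =>
      simp only [Formula.bigDisj, List.foldr_cons, List.mem_cons]
      rw [show (List.foldr Formula.or Formula.bot t) = Formula.bigDisj t from rfl]
      rw [sat_or, ih]
      constructor
      · rintro (h | ⟨φ, hφ, hs⟩)
        · exact ⟨a, Or.inl rfl, h⟩
        · exact ⟨φ, Or.inr hφ, hs⟩
      · rintro ⟨φ, (rfl | hφ), hs⟩
        · exact Or.inl hs
        · exact Or.inr ⟨φ, hφ, hs⟩

end Helpers

lemma widBul_eq (n : ℕ) : widBul n = .imp
    (Formula.bigConj ((List.finRange (n + 1)).map fun i : Fin (n + 1) =>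
      Formula.dia (.and (.var i) (.box (Formula.neg (.var i))))))
    (Formula.bigDisj ((List.finRange (n + 1)).flatMap fun i =>
      (List.finRange (n + 1)).flatMap fun j =>
        if i = j then []
        else [Formula.dia (.and (.var i) (.or (.var j) (Formula.dia (.var j))))])) := by
  unfold widBul
  congr 1
  simp only [List.pure_def, List.bind_eq_flatMap, ← List.map_eq_flatMap, List.map_map]; rfl

/-- For a rooted transitive frame, `Wid_n^•` is valid iff every irreflexive
antichain in the frame has at most `n` elements. -/
theorem widBul_valid_iff (n : ℕ) (hn : 1 ≤ n) (F : Frame)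
    (htr : ∀ a b c, F.rel a b → F.rel b c → F.rel a c)
    (hroot : ∃ w : F.World, ∀ u, u = w ∨ F.rel w u) :
    Valid F (widBul n) ↔
      ∀ A : Set F.World, AntichainIn F.rel A → (∀ a ∈ A, ¬ F.rel a a) →
        Cardinal.mk A ≤ (n : Cardinal) := by
  constructor
  · -- validity → antichain bound
    intro hval A hA hirr
    by_contra hle
    have hlt : (n : Cardinal) < Cardinal.mk A := lt_of_not_ge hle
    have hstep : ((n + 1 : ℕ) : Cardinal) ≤ Cardinal.mk A := by
      push_cast
      exact (Cardinal.add_one_le_succ _).trans (Order.succ_le_of_lt hlt)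
    rw [← Cardinal.mk_fin (n + 1), Cardinal.le_def] at hstep
    obtain ⟨e⟩ := hstep
    obtain ⟨w, hw⟩ := hroot
    set a : Fin (n + 1) → F.World := fun i => (e i : F.World) with ha
    have hmem : ∀ i, a i ∈ A := fun i => (e i).2
    have hainj : Function.Injective a := fun i j h => e.injective (Subtype.ext h)
    have hne : ∀ i j : Fin (n + 1), i ≠ j → a i ≠ a j :=
      fun i j hij h => hij (hainj h)
    have hR : ∀ i, F.rel w (a i) := by
      intro i
      rcases hw (a i) with h | h
      · exfalso
        obtain ⟨j, hj⟩ : ∃ j : Fin (n + 1), j ≠ i := by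
          by_cases h0 : i = ⟨0, by omega⟩
          · exact ⟨⟨1, by omega⟩, by simp [h0, Fin.ext_iff]⟩
          · exact ⟨⟨0, by omega⟩, fun h => h0 h.symm⟩
        rcases hw (a j) with h' | h'
        · exact hj (hainj (h'.trans h.symm))
        · exact (hA (a i) (hmem i) (a j) (hmem j)
            (hne i j fun h'' => hj h''.symm)).1 (h ▸ h')
      · exact h
    set V : ℕ → F.World → Prop :=
      fun k x => ∃ i : Fin (n + 1), (i : ℕ) = k ∧ x = a i with hV
    have hval' := hval V w
    rw [widBul_eq] at hval'
    have hant : Sat F V w (Formula.bigConj ((List.finRange (n + 1)).map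
        fun i : Fin (n + 1) =>
          Formula.dia (.and (.var i) (.box (Formula.neg (.var i)))))) := by
      rw [sat_bigConj]
      intro φ hφ
      rw [List.mem_map] at hφ
      obtain ⟨i, -, rfl⟩ := hφ
      rw [sat_dia]
      refine ⟨a i, hR i, ?_⟩
      rw [sat_and]
      refine ⟨⟨i, rfl, rfl⟩, ?_⟩
      intro v hv hVv
      obtain ⟨i', hi', rfl⟩ := hVv
      have e1 : i' = i := Fin.val_injective hi'
      rw [e1] at hv
      exact hirr (a i) (hmem i) hv
    have hcon := hval' hant
    rw [sat_bigDisj] at hcon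
    obtain ⟨φ, hφ, hs⟩ := hcon
    rw [List.mem_flatMap] at hφ
    obtain ⟨i, -, hφ⟩ := hφ
    rw [List.mem_flatMap] at hφ
    obtain ⟨j, -, hφ⟩ := hφ
    by_cases hij : i = j
    · simp [hij] at hφ
    · rw [if_neg hij, List.mem_singleton] at hφ
      subst hφ
      rw [sat_dia] at hs
      obtain ⟨v, hv, hs⟩ := hs
      rw [sat_and] at hs
      obtain ⟨hVi, hs⟩ := hs
      obtain ⟨i', hi', rfl⟩ := hVi
      have e1 : (i' : ℕ) = i := hi'
      rw [sat_or] at hs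
      rcases hs with hVj | hdj
      · obtain ⟨j', hj', hj2⟩ := hVj
        have e2 : (j' : ℕ) = j := hj'
        have hne' : i' ≠ j' := fun h => hij (by rw [← e1, ← e2, h])
        exact hne i' j' hne' hj2
      · rw [sat_dia] at hdj
        obtain ⟨x, hx, hVx⟩ := hdj
        obtain ⟨j', hj', rfl⟩ := hVx
        have e2 : (j' : ℕ) = j := hj'
        have hne' : i' ≠ j' := fun h => hij (by rw [← e1, ← e2, h])
        exact (hA (a i') (hmem i') (a j') (hmem j') (hne i' j' hne')).1 hx
  · -- antichain bound → validity
    intro hmax V w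
    rw [widBul_eq]
    intro hant
    rw [sat_bigConj] at hant
    have hex : ∀ i : Fin (n + 1), ∃ u, F.rel w u ∧ V i u ∧
        ∀ v, F.rel u v → ¬ V i v := by
      intro i
      have h := hant _ (List.mem_map.mpr ⟨i, List.mem_finRange i, rfl⟩)
      rw [sat_dia] at h
      obtain ⟨u, hwu, hu⟩ := h
      rw [sat_and] at hu
      exact ⟨u, hwu, hu.1, fun v hv hVv => hu.2 v hv hVv⟩
    choose u hwu hVu hbox using hex
    by_contra hcon
    have hkey : ∀ i j : Fin (n + 1), i ≠ j → ∀ v, F.rel w v → V i v →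
        ¬ V j v ∧ ∀ x, F.rel v x → ¬ V j x := by
      intro i j hij v hv hVi
      by_contra h
      apply hcon
      rw [sat_bigDisj]
      refine ⟨((Formula.var ↑i).and ((Formula.var ↑j).or (Formula.var ↑j).dia)).dia,
        List.mem_flatMap.mpr ⟨i, by simp,
        List.mem_flatMap.mpr ⟨j, by simp, by simp [Fin.val_injective.ne hij]⟩⟩, ?_⟩
      rw [sat_dia]
      refine ⟨v, hv, ?_⟩
      rw [sat_and]
      refine ⟨hVi, ?_⟩
      rw [sat_or]
      rcases not_and_or.mp h with h1 | h2
      · exact Or.inl (not_not.mp h1)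
      · push_neg at h2
        obtain ⟨x, hx, hVx⟩ := h2
        exact Or.inr (sat_dia.mpr ⟨x, hx, hVx⟩)
    have hinj : Function.Injective u := by
      intro i j hij
      by_contra hij'
      exact (hkey i j hij' (u i) (hwu i) (hVu i)).1 (hij ▸ hVu j)
    have hAC : AntichainIn F.rel (Set.range u) := by
      rintro _ ⟨i, rfl⟩ _ ⟨j, rfl⟩ hne
      have hij : i ≠ j := fun h => hne (h ▸ rfl)
      exact ⟨fun hR => (hkey i j hij (u i) (hwu i) (hVu i)).2 (u j) hR (hVu j),
        fun hR => (hkey j i hij.symm (u j) (hwu j) (hVu j)).2 (u i) hR (hVu i)⟩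
    have hirr : ∀ b ∈ Set.range u, ¬ F.rel b b := by
      rintro _ ⟨i, rfl⟩ hR
      exact hbox i (u i) hR (hVu i)
    have hle := hmax _ hAC hirr
    rw [Cardinal.mk_range_eq u hinj, Cardinal.mk_fin] at hle
    rw [Nat.cast_le] at hle
    omega
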